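/- Let $\gamma>1$, $L\geq 1$, $0<\iota<1$ and suppose $0<\gamma^{-(1-\iota)}L^{\iota}<e^{-2c}<1$ for some $c>0$. Let $(L_1,\dots,L_n)$ be a sequence with each $L_i\in\{L,\gamma^{-1}\}$ such that for every positive integer $j$ with $jm\leq n$, the number of indices $i\in(n-jm,n]$ with $L_i=L$ is at most $\iota jm$. Then for every $0\leq k<n$, the product $L_{k+1}L_{k+2}\cdots L_n \leq (Le^{2c})^m e^{-2c(n-k)}$. -/

import Mathlib

open Finset

/-- Contraction along good inverse branches: if a sequence of local Lipschitz
constants, each equal to `L` or `γ⁻¹`, takes the value `L` at most an `ι`-fraction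
of the time in every final window `(n - j*m, n]`, then the tail products contract
exponentially. -/
theorem good_branch_contraction
    (γ L c ι : ℝ) (m n : ℕ)
    (hγ : 1 < γ) (hL : 1 ≤ L) (hι0 : 0 < ι) (hι1 : ι < 1) (hc : 0 < c)
    (hm : 0 < m)
    (havg : 0 < γ ^ (-(1 - ι)) * L ^ ι)
    (havg' : γ ^ (-(1 - ι)) * L ^ ι < Real.exp (-(2 * c)))
    (hexp : Real.exp (-(2 * c)) < 1)
    (Ls : ℕ → ℝ)
    (hvals : ∀ i, Ls i = L ∨ Ls i = γ⁻¹)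
    (hgood : ∀ j : ℕ, 1 ≤ j → j * m ≤ n →
      (((Finset.Ioc (n - j * m) n).filter (fun i => Ls i = L)).card : ℝ) ≤ ι * (j * m)) :
    ∀ k, k < n →
      (∏ i ∈ Finset.Ioc k n, Ls i) ≤
        (L * Real.exp (2 * c)) ^ m * Real.exp (-(2 * c) * ((n : ℝ) - k)) := by
  intro k hk
  have hγ0 : (0:ℝ) < γ := lt_trans one_pos hγ
  have hL0 : (0:ℝ) < L := lt_of_lt_of_le one_pos hL
  have hlogγ : 0 < Real.log γ := Real.log_pos hγ
  have hlogL : 0 ≤ Real.log L := Real.log_nonneg hL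
  have hinv1 : γ⁻¹ ≤ 1 := by
    rw [inv_le_one_iff₀]; right; exact hγ.le
  have hLs_pos : ∀ x, 0 < Ls x := by
    intro x
    rcases hvals x with h | h
    · rw [h]; exact hL0
    · rw [h]; exact inv_pos.mpr hγ0
  have hLs_leL : ∀ x, Ls x ≤ L := by
    intro x
    rcases hvals x with h | h
    · rw [h]
    · rw [h]; exact le_trans hinv1 hL
  set j := (n - k) / m with hjdef
  set i0 := (n - k) % m with hi0def
  have hdm : j * m + i0 = n - k := by
    rw [mul_comm]; exact Nat.div_add_mod (n - k) m
  have hi0m : i0 < m := Nat.mod_lt _ hm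
  set t := n - j * m with htdef
  have hkt : k ≤ t := by omega
  have htn : t ≤ n := by omega
  have hnt : n - t = j * m := by omega
  have hti : t - k = i0 := by omega
  -- log form of the average expansion hypothesis
  have hlog : -(1 - ι) * Real.log γ + ι * Real.log L < -(2 * c) := by
    have h1 := Real.log_lt_log havg havg'
    rw [Real.log_exp, Real.log_mul (by positivity) (by positivity),
      Real.log_rpow hγ0, Real.log_rpow hL0] at h1
    exact h1
  -- bound on the initial short stretch
  have hA : (∏ x ∈ Finset.Ioc k t, Ls x) ≤ L ^ i0 := by
    calc (∏ x ∈ Finset.Ioc k t, Ls x) ≤ ∏ _x ∈ Finset.Ioc k t, L :=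
          Finset.prod_le_prod (fun x _ => (hLs_pos x).le) (fun x _ => hLs_leL x)
      _ = L ^ i0 := by rw [Finset.prod_const, Nat.card_Ioc, hti]
  -- bound on the long final window
  have hB : (∏ x ∈ Finset.Ioc t n, Ls x) ≤ Real.exp (-(2 * c) * (j * m : ℕ)) := by
    rcases Nat.eq_zero_or_pos j with hj0 | hj1
    · have ht' : t = n := by rw [htdef, hj0, zero_mul, Nat.sub_zero]
      simp [ht', hj0]
    · have hgj := hgood j hj1 (by omega)
      rw [← htdef] at hgj
      set S := Finset.Ioc t n with hS
      set r := (S.filter (fun x => Ls x = L)).card with hrdef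
      set s := (S.filter (fun x => ¬ Ls x = L)).card with hsdef
      have hrs : r + s = j * m := by
        rw [hrdef, hsdef, Finset.card_filter_add_card_filter_not, hS,
          Nat.card_Ioc, hnt]
      have hprod : (∏ x ∈ S, Ls x) = L ^ r * γ⁻¹ ^ s := by
        rw [← Finset.prod_filter_mul_prod_filter_not S (fun x => Ls x = L)]
        congr 1
        · rw [Finset.prod_congr rfl (fun x hx => (Finset.mem_filter.mp hx).2),
            Finset.prod_const]
        · rw [Finset.prod_congr rfl (fun x hx => ?_), Finset.prod_const]
          rcases hvals x with h | h
          · exact absurd h (Finset.mem_filter.mp hx).2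
          · exact h
      have hr : (r : ℝ) ≤ ι * (j * m : ℕ) := by exact_mod_cast hgj
      rw [hprod]
      have hexpL : L ^ r = Real.exp ((r : ℝ) * Real.log L) := by
        rw [← Real.exp_log hL0, ← Real.exp_nat_mul, Real.exp_log hL0]
      have hexpγ : γ⁻¹ ^ s = Real.exp (-((s : ℝ) * Real.log γ)) := by
        rw [← Real.exp_log (inv_pos.mpr hγ0), ← Real.exp_nat_mul, Real.log_inv]
        ring_nf
      rw [hexpL, hexpγ, ← Real.exp_add, Real.exp_le_exp]
      have hsr : (s : ℝ) = (j * m : ℕ) - (r : ℝ) := by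
        have : (r : ℝ) + s = (j * m : ℕ) := by exact_mod_cast hrs
        linarith
      have hN0 : (0 : ℝ) ≤ (j * m : ℕ) := Nat.cast_nonneg _
      nlinarith [mul_le_mul_of_nonneg_right hr (add_nonneg hlogL hlogγ.le),
        mul_le_mul_of_nonneg_left hlog.le hN0]
  -- combine
  have hsplit : (∏ x ∈ Finset.Ioc k n, Ls x)
      = (∏ x ∈ Finset.Ioc k t, Ls x) * ∏ x ∈ Finset.Ioc t n, Ls x :=
    (Finset.prod_Ioc_consecutive Ls hkt htn).symm
  have hcast : ((j * m : ℕ) : ℝ) + (i0 : ℕ) = (n : ℝ) - k := by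
    have h1 : ((j * m + i0 : ℕ) : ℝ) = ((n - k : ℕ) : ℝ) := by rw [hdm]
    rw [Nat.cast_sub hk.le] at h1
    push_cast at h1 ⊢
    linarith
  have hstep : Real.exp (-(2 * c) * (j * m : ℕ))
      = Real.exp (2 * c * i0) * Real.exp (-(2 * c) * ((n : ℝ) - k)) := by
    rw [← Real.exp_add]
    congr 1
    rw [← hcast]
    ring
  have hpos1 : (0:ℝ) < ∏ x ∈ Finset.Ioc k t, Ls x :=
    Finset.prod_pos (fun x _ => hLs_pos x)
  have hbase : (1:ℝ) ≤ L * Real.exp (2 * c) := by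
    have h1 : (1:ℝ) ≤ Real.exp (2 * c) := by
      rw [show (1:ℝ) = Real.exp 0 from (Real.exp_zero).symm]
      exact Real.exp_le_exp.mpr (by positivity)
    nlinarith
  calc (∏ x ∈ Finset.Ioc k n, Ls x)
      = (∏ x ∈ Finset.Ioc k t, Ls x) * ∏ x ∈ Finset.Ioc t n, Ls x := hsplit
    _ ≤ L ^ i0 * Real.exp (-(2 * c) * (j * m : ℕ)) := by
        apply mul_le_mul hA hB (Finset.prod_pos (fun x _ => hLs_pos x)).le
          (pow_nonneg hL0.le _)
    _ = (L * Real.exp (2 * c)) ^ i0 * Real.exp (-(2 * c) * ((n : ℝ) - k)) := by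
        rw [hstep, mul_pow, ← Real.exp_nat_mul]
        ring_nf
    _ ≤ (L * Real.exp (2 * c)) ^ m * Real.exp (-(2 * c) * ((n : ℝ) - k)) := by
        apply mul_le_mul_of_nonneg_right (pow_le_pow_right₀ hbase hi0m.le)
          (Real.exp_nonneg _)
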